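/- Let (e_n)_{n∈ℕ} be an orthonormal basis of H. Then the sequence X = (e_1, e_1, e_1, e_2, e_3, e_4, ...) is a frame for H, and Z = (e_1, −(1/2)e_1, (1/2)e_1, e_2, e_3, e_4, ...) is a dual frame of X; moreover ⟨z_1, x_1⟩ = 1, so the operator I − θ_{z_1,x_1} = I − θ_{e_1,e_1} is not invertible (e_1 lies in its kernel). -/

import Mathlib

noncomputable section

variable {H : Type*} [NormedAddCommGroup H] [InnerProductSpace ℂ H] [CompleteSpace H]

/-- `(x n)_{n ∈ I}` is a frame for `H` with frame bounds `A`, `B`. -/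
def IsFrameOn (x : ℕ → H) (I : Set ℕ) (A B : ℝ) : Prop :=
  0 < A ∧ 0 < B ∧ ∀ h : H,
    Summable (fun n : I => ‖(inner ℂ (x n) h : ℂ)‖ ^ 2) ∧
    A * ‖h‖ ^ 2 ≤ ∑' n : I, ‖(inner ℂ (x n) h : ℂ)‖ ^ 2 ∧
    ∑' n : I, ‖(inner ℂ (x n) h : ℂ)‖ ^ 2 ≤ B * ‖h‖ ^ 2

/-- `(z n)_{n ∈ I}` is a dual frame of `(x n)_{n ∈ I}`. -/
def IsDualFrameOn (z x : ℕ → H) (I : Set ℕ) : Prop :=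
  (∃ A B : ℝ, IsFrameOn z I A B) ∧
  ∀ h : H, HasSum (fun n : I => (inner ℂ (x n) h : ℂ) • z n) h

/-- The rank-one operator `θ_{y,x} : h ↦ ⟨h, x⟩ y`. -/
def rankOne (y x : H) : H →L[ℂ] H := (innerSL ℂ x).smulRight y


lemma hasSum_shift {M : Type*} [AddCommMonoid M] [TopologicalSpace M] [ContinuousAdd M]
    {g f : ℕ → M} {s : M} (hg : HasSum g s) (h0 : f 0 = g 0)
    (hf : ∀ n, 3 ≤ n → f n = g (n - 2)) :
    HasSum f (s + (f 1 + f 2)) := by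
  set ι : ℕ → ℕ := fun n => if n = 0 then 0 else n + 2 with hι
  have hinj : Function.Injective ι := by
    intro a b hab
    simp only [hι] at hab
    split_ifs at hab <;> omega
  set f' : ℕ → M := fun n => if n = 1 ∨ n = 2 then 0 else f n with hf'
  have hcomp : f' ∘ ι = g := by
    funext n
    by_cases hn : n = 0
    · subst hn; simp [hι, hf', h0]
    · have h3 : 3 ≤ n + 2 := by omega
      simp only [Function.comp, hι, hf', if_neg hn]
      rw [if_neg (by omega), hf _ h3]
      congr 1 <;> omega
  have hvan : ∀ m ∉ Set.range ι, f' m = 0 := by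
    intro m hm
    have : m = 1 ∨ m = 2 := by
      by_contra hc
      push_neg at hc
      apply hm
      rcases Nat.lt_or_ge m 3 with h | h
      · refine ⟨0, ?_⟩
        simp only [hι, if_pos rfl]
        omega
      · exact ⟨m - 2, by simp only [hι]; rw [if_neg (by omega)]; omega⟩
    simp [hf', this]
  have hsf' : HasSum f' s := by
    rw [← hinj.hasSum_iff hvan, hcomp]; exact hg
  have h1 : HasSum (fun n => if n = 1 then f 1 else 0) (f 1) := hasSum_ite_eq 1 (f 1)
  have h2 : HasSum (fun n => if n = 2 then f 2 else 0) (f 2) := hasSum_ite_eq 2 (f 2)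
  have := hsf'.add (h1.add h2)
  convert this using 2 with n
  rcases n with _ | _ | _ | n <;> simp [hf']

lemma parseval {H : Type*} [NormedAddCommGroup H] [InnerProductSpace ℂ H] [CompleteSpace H]
    (e : HilbertBasis ℕ ℂ H) (h : H) :
    HasSum (fun k => ‖(inner ℂ (e k) h : ℂ)‖ ^ 2) (‖h‖ ^ 2) := by
  have h1 := e.hasSum_inner_mul_inner h h
  have heq : (fun i => (inner ℂ h (e i) : ℂ) * inner ℂ (e i) h) =
      fun i => ((‖(inner ℂ (e i) h : ℂ)‖ ^ 2 : ℝ) : ℂ) := by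
    funext i
    rw [← inner_conj_symm, RCLike.conj_mul]
    norm_cast
  rw [heq] at h1
  have hhh : (inner ℂ h h : ℂ) = ((‖h‖ ^ 2 : ℝ) : ℂ) := by
    rw [inner_self_eq_norm_sq_to_K]
    norm_cast
  rw [hhh] at h1
  exact Complex.hasSum_ofReal.mp h1

/-- Example: with `(e n)` an orthonormal basis (indexed from `0`),
`X = (e 0, e 0, e 0, e 1, e 2, …)` is a frame, `Z = (e 0, −½ e 0, ½ e 0, e 1, e 2, …)`
is a dual frame of `X`, `⟨z 0, x 0⟩ = 1`, and `I − θ_{z 0, x 0} = I − θ_{e 0, e 0}`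
is not invertible, since `e 0` lies in its kernel. -/
theorem stmt13 (e : HilbertBasis ℕ ℂ H) (x z : ℕ → H)
    (hx0 : x 0 = e 0) (hx1 : x 1 = e 0) (hx2 : x 2 = e 0)
    (hx : ∀ n, 3 ≤ n → x n = e (n - 2))
    (hz0 : z 0 = e 0) (hz1 : z 1 = -((1 : ℂ) / 2) • e 0) (hz2 : z 2 = ((1 : ℂ) / 2) • e 0)
    (hz : ∀ n, 3 ≤ n → z n = e (n - 2)) :
    (∃ A B : ℝ, IsFrameOn x Set.univ A B) ∧
    IsDualFrameOn z x Set.univ ∧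
    (inner ℂ (x 0) (z 0) : ℂ) = 1 ∧
    (ContinuousLinearMap.id ℂ H - rankOne (z 0) (x 0)) (e 0) = 0 ∧
    ¬∃ Tinv : H →L[ℂ] H,
      Tinv.comp (ContinuousLinearMap.id ℂ H - rankOne (z 0) (x 0)) =
        ContinuousLinearMap.id ℂ H ∧
      (ContinuousLinearMap.id ℂ H - rankOne (z 0) (x 0)).comp Tinv =
        ContinuousLinearMap.id ℂ H := by
  -- basic facts
  have he0 : (inner ℂ (e 0) (e 0) : ℂ) = 1 := by
    have := orthonormal_iff_ite.mp e.orthonormal 0 0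
    simpa using this
  have hne : e 0 ≠ 0 := by
    intro hc
    have := e.orthonormal.1 0
    rw [hc] at this
    simp at this
  have habound : ∀ h : H, ‖(inner ℂ (e 0) h : ℂ)‖ ^ 2 ≤ ‖h‖ ^ 2 := by
    intro h
    have h1 : ‖(inner ℂ (e 0) h : ℂ)‖ ≤ ‖h‖ := by
      have := norm_inner_le_norm (𝕜 := ℂ) (e 0) h
      rwa [e.orthonormal.1 0, one_mul] at this
    exact pow_le_pow_left₀ (norm_nonneg _) h1 2
  refine ⟨⟨1, 3, one_pos, by norm_num, fun h => ?_⟩, ⟨⟨1, 3/2, one_pos, by norm_num, fun h => ?_⟩, fun h => ?_⟩, ?_, ?_, ?_⟩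
  · -- x is a frame
    set a := ‖(inner ℂ (e 0) h : ℂ)‖ ^ 2 with ha
    have hs : HasSum (fun n => ‖(inner ℂ (x n) h : ℂ)‖ ^ 2) (‖h‖ ^ 2 + (a + a)) := by
      have := hasSum_shift (g := fun k => ‖(inner ℂ (e k) h : ℂ)‖ ^ 2)
        (f := fun n => ‖(inner ℂ (x n) h : ℂ)‖ ^ 2) (parseval e h)
        (by simp [hx0]) (fun n hn => by simp [hx n hn])
      simpa [hx1, hx2] using this
    have hsum : Summable (fun n : (Set.univ : Set ℕ) => ‖(inner ℂ (x ↑n) h : ℂ)‖ ^ 2) :=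
      hs.summable.subtype _
    have htsum : ∑' n : (Set.univ : Set ℕ), ‖(inner ℂ (x ↑n) h : ℂ)‖ ^ 2 = ‖h‖ ^ 2 + (a + a) := by
      rw [tsum_univ (fun n => ‖(inner ℂ (x n) h : ℂ)‖ ^ 2)]; exact hs.tsum_eq
    refine ⟨hsum, ?_, ?_⟩
    · rw [htsum, one_mul]
      have h0 : 0 ≤ a := by positivity
      linarith
    · rw [htsum]
      have := habound h
      linarith
  · -- z is a frame
    set a := ‖(inner ℂ (e 0) h : ℂ)‖ ^ 2 with ha
    have h12 : ‖(inner ℂ (z 1) h : ℂ)‖ ^ 2 = a / 4 := by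
      rw [hz1, inner_smul_left]
      simp [norm_mul, mul_pow, ha]
      ring
    have h22 : ‖(inner ℂ (z 2) h : ℂ)‖ ^ 2 = a / 4 := by
      rw [hz2, inner_smul_left]
      simp [norm_mul, mul_pow, ha]
      ring
    have hs : HasSum (fun n => ‖(inner ℂ (z n) h : ℂ)‖ ^ 2) (‖h‖ ^ 2 + (a/4 + a/4)) := by
      have := hasSum_shift (g := fun k => ‖(inner ℂ (e k) h : ℂ)‖ ^ 2)
        (f := fun n => ‖(inner ℂ (z n) h : ℂ)‖ ^ 2) (parseval e h)
        (by simp [hz0]) (fun n hn => by simp [hz n hn])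
      simpa only [h12, h22] using this
    have hsum : Summable (fun n : (Set.univ : Set ℕ) => ‖(inner ℂ (z ↑n) h : ℂ)‖ ^ 2) :=
      hs.summable.subtype _
    have htsum : ∑' n : (Set.univ : Set ℕ), ‖(inner ℂ (z ↑n) h : ℂ)‖ ^ 2 = ‖h‖ ^ 2 + (a/4 + a/4) := by
      rw [tsum_univ (fun n => ‖(inner ℂ (z n) h : ℂ)‖ ^ 2)]; exact hs.tsum_eq
    refine ⟨hsum, ?_, ?_⟩
    · rw [htsum, one_mul]
      have h0 : 0 ≤ a := by positivity
      linarith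
    · rw [htsum]
      have := habound h
      linarith
  · -- dual frame reconstruction
    have hg : HasSum (fun k => (inner ℂ (e k) h : ℂ) • e k) h := by
      have := e.hasSum_repr h
      simpa [e.repr_apply_apply] using this
    have hs : HasSum (fun n => (inner ℂ (x n) h : ℂ) • z n)
        (h + ((inner ℂ (x 1) h : ℂ) • z 1 + (inner ℂ (x 2) h : ℂ) • z 2)) := by
      exact hasSum_shift hg (by rw [hx0, hz0]) (fun n hn => by rw [hx n hn, hz n hn])
    have hcancel : (inner ℂ (x 1) h : ℂ) • z 1 + (inner ℂ (x 2) h : ℂ) • z 2 = 0 := by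
      rw [hx1, hx2, hz1, hz2, smul_smul, smul_smul, ← add_smul]
      ring_nf
      simp
    rw [hcancel, add_zero] at hs
    exact (hasSum_subtype_iff_of_support_subset (by simp)).mpr hs
  · rw [hx0, hz0]; exact he0
  · simp [rankOne, hx0, hz0, he0, e.orthonormal.1 0]
  · rintro ⟨Tinv, hleft, -⟩
    have h1 : Tinv ((ContinuousLinearMap.id ℂ H - rankOne (z 0) (x 0)) (e 0)) = e 0 := by
      rw [← ContinuousLinearMap.comp_apply, hleft]; rfl
    have h2 : (ContinuousLinearMap.id ℂ H - rankOne (z 0) (x 0)) (e 0) = 0 := by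
      simp [rankOne, hx0, hz0, he0, e.orthonormal.1 0]
    rw [h2, map_zero] at h1
    exact hne h1.symm


end
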